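/- Let p,q ≥ 1, let I_x = ((x_1⋯x_p)/x_i : i ∈ [p]) ⊂ K[x_1,...,x_p] and let I_y ⊂ K[y_1,...,y_q] be a monomial ideal containing the monomial y = y_1⋯y_q. Set x = x_1⋯x_p. Then for all k ≥ 1 and 0 < ℓ ≤ k: (∑_{h=0}^{ℓ-1} x^{k−h} y^h I_y^{k−h} I_x^h) ∩ (x^{k−ℓ} y^ℓ I_y^{k−ℓ} I_x^ℓ) = x^{k−ℓ+1} I_x^{ℓ−1} y^ℓ I_y^{k−ℓ}, as ideals in K[x_1,...,x_p,y_1,...,y_q]. -/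
import Mathlib


open MvPolynomial

/-- The ideal `x^{k−h} y^h I_y^{k−h} I_x^h` in `K[x_1,…,x_p,y_1,…,y_q]`. -/
noncomputable def Jh (K : Type*) [Field K] (p q : ℕ)
    (Ix Iy : Ideal (MvPolynomial (Fin p ⊕ Fin q) K)) (k h : ℕ) :
    Ideal (MvPolynomial (Fin p ⊕ Fin q) K) :=
  Ideal.span {(∏ i : Fin p, X (Sum.inl i)) ^ (k - h) *
    (∏ j : Fin q, X (Sum.inr j)) ^ h} * Iy ^ (k - h) * Ix ^ h

namespace Stmt7Aux

variable {K : Type*} [Field K] {σ ι : Type*}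

def M (K : Type*) [Field K] (S : Set (σ →₀ ℕ)) : Set (MvPolynomial σ K) :=
  (fun d => monomial d (1 : K)) '' S

def iter (S : Set (σ →₀ ℕ)) : ℕ → Set (σ →₀ ℕ)
  | 0 => {0}
  | n + 1 => Set.image2 (· + ·) S (iter S n)

lemma prodX (s : Finset ι) (g : ι → σ) :
    (∏ i ∈ s, (X (g i) : MvPolynomial σ K)) =
      monomial (∑ i ∈ s, Finsupp.single (g i) 1) 1 := by
  induction s using Finset.cons_induction with
  | empty => simp
  | cons a s h ih =>
      rw [Finset.prod_cons, Finset.sum_cons, ih, X, monomial_mul, one_mul]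

lemma span_M_mul (S T : Set (σ →₀ ℕ)) :
    Ideal.span (M K S) * Ideal.span (M K T) =
      Ideal.span (M K (Set.image2 (· + ·) S T)) := by
  rw [Ideal.span_mul_span']
  congr 1
  rw [M, M, M, ← Set.image2_mul, Set.image2_image_left, Set.image2_image_right,
    Set.image_image2]
  exact Set.image2_congr fun a _ b _ => by simp [monomial_mul]

lemma span_M_pow (S : Set (σ →₀ ℕ)) (n : ℕ) :
    Ideal.span (M K S) ^ n = Ideal.span (M K (iter S n)) := by
  induction n with
  | zero =>
      rw [pow_zero, iter, Ideal.one_eq_top]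
      have : M K ({0} : Set (σ →₀ ℕ)) = {1} := by simp [M]
      rw [this, Ideal.span_singleton_one]
  | succ n ih =>
      rw [pow_succ, ih, mul_comm, span_M_mul]
      rfl

lemma sum_span_M (T : ℕ → Set (σ →₀ ℕ)) (n : ℕ) :
    ∑ h ∈ Finset.range n, Ideal.span (M K (T h)) =
      Ideal.span (M K (⋃ h ∈ Finset.range n, T h)) := by
  induction n with
  | zero => simp [M]
  | succ n ih =>
      rw [Finset.sum_range_succ, ih, Finset.range_add_one, Finset.set_biUnion_insert]
      simp only [M, Set.image_union, Ideal.span_union]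
      rw [Submodule.add_eq_sup, sup_comm]

lemma mem_span_M {S : Set (σ →₀ ℕ)} {f : MvPolynomial σ K} :
    f ∈ Ideal.span (M K S) ↔ ∀ m ∈ f.support, ∃ s ∈ S, s ≤ m :=
  mem_ideal_span_monomial_image

lemma iter_add_mem {S : Set (σ →₀ ℕ)} {a b : σ →₀ ℕ} {m n : ℕ}
    (ha : a ∈ iter S m) (hb : b ∈ iter S n) : a + b ∈ iter S (m + n) := by
  induction m generalizing a with
  | zero => simp only [iter, Set.mem_singleton_iff] at ha; subst ha; simpa
  | succ m ih =>
      obtain ⟨c, hc, d, hd, rfl⟩ := ha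
      have h2 : c + (d + b) ∈ iter S (m + n + 1) := ⟨c, hc, d + b, ih hd, rfl⟩
      rw [show m + 1 + n = m + n + 1 by omega]
      simpa [add_assoc] using h2

lemma mem_iter_one {S : Set (σ →₀ ℕ)} {d : σ →₀ ℕ} (hd : d ∈ S) : d ∈ iter S 1 :=
  ⟨d, hd, 0, rfl, add_zero d⟩

lemma nsmul_mem_iter {S : Set (σ →₀ ℕ)} {d : σ →₀ ℕ} (hd : d ∈ S) (n : ℕ) :
    n • d ∈ iter S n := by
  induction n with
  | zero => simp [iter]
  | succ n ih => exact ⟨d, hd, n • d, ih, by rw [succ_nsmul, add_comm]⟩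

lemma iter_zero_on {S : Set (σ →₀ ℕ)} {z : σ} (hS : ∀ d ∈ S, d z = 0) :
    ∀ n, ∀ d ∈ iter S n, d z = 0 := by
  intro n
  induction n with
  | zero => intro d hd; simp only [iter, Set.mem_singleton_iff] at hd; simp [hd]
  | succ n ih =>
      rintro d ⟨a, ha, b, hb, rfl⟩
      simp [Finsupp.add_apply, hS a ha, ih b hb]

end Stmt7Aux

open Stmt7Aux Finsupp in
theorem stmt7 {K : Type*} [Field K] {p q : ℕ} (hp : 1 ≤ p) (hq : 1 ≤ q)
    (Ix Iy : Ideal (MvPolynomial (Fin p ⊕ Fin q) K))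
    (hIx : Ix = Ideal.span {m | ∃ i : Fin p,
      m = ∏ t ∈ Finset.univ.erase i, X (Sum.inl t)})
    (B : Set (Fin q →₀ ℕ))
    (hIy : Iy = Ideal.span
      ((fun d : Fin q →₀ ℕ => monomial (d.mapDomain Sum.inr) (1 : K)) '' B))
    (hyIy : (∏ j : Fin q, (X (Sum.inr j) : MvPolynomial (Fin p ⊕ Fin q) K)) ∈ Iy)
    (k ℓ : ℕ) (hk : 1 ≤ k) (hl : 0 < ℓ) (hlk : ℓ ≤ k) :
    (∑ h ∈ Finset.range ℓ, Jh K p q Ix Iy k h) ⊓ Jh K p q Ix Iy k ℓ =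
      Ideal.span {(∏ i : Fin p, (X (Sum.inl i) : MvPolynomial (Fin p ⊕ Fin q) K))
          ^ (k - ℓ + 1)} * Ix ^ (ℓ - 1) *
        Ideal.span {(∏ j : Fin q, (X (Sum.inr j) : MvPolynomial (Fin p ⊕ Fin q) K)) ^ ℓ} *
        Iy ^ (k - ℓ) := by
  classical
  set E : (Fin p ⊕ Fin q) →₀ ℕ := ∑ i : Fin p, Finsupp.single (Sum.inl i) 1 with hE
  set F : (Fin p ⊕ Fin q) →₀ ℕ := ∑ j : Fin q, Finsupp.single (Sum.inr j) 1 with hF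
  have hEl : ∀ i, E (Sum.inl i) = 1 := by
    intro i; simp [hE, Finsupp.finset_sum_apply, Finsupp.single_apply]
  have hEr : ∀ j, E (Sum.inr j) = 0 := by
    intro j; simp [hE, Finsupp.finset_sum_apply, Finsupp.single_apply]
  have hFl : ∀ i, F (Sum.inl i) = 0 := by
    intro i; simp [hF, Finsupp.finset_sum_apply, Finsupp.single_apply]
  have hFr : ∀ j, F (Sum.inr j) = 1 := by
    intro j; simp [hF, Finsupp.finset_sum_apply, Finsupp.single_apply]
  set SIx : Set ((Fin p ⊕ Fin q) →₀ ℕ) :=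
    {d | ∃ i : Fin p, d = ∑ t ∈ Finset.univ.erase i, Finsupp.single (Sum.inl t) 1} with hSIx
  set SIy : Set ((Fin p ⊕ Fin q) →₀ ℕ) := Finsupp.mapDomain Sum.inr '' B with hSIy
  -- coordinate facts about generators
  have hSIxr : ∀ d ∈ SIx, ∀ j, d (Sum.inr j) = 0 := by
    rintro d ⟨i, rfl⟩ j
    simp [Finsupp.finset_sum_apply, Finsupp.single_apply]
  have hSIxl : ∀ d ∈ SIx, ∀ i, d (Sum.inl i) ≤ 1 := by
    rintro d ⟨i0, rfl⟩ i
    rw [Finsupp.finset_sum_apply]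
    have hsub : (∑ t ∈ Finset.univ.erase i0, (Finsupp.single (Sum.inl t) 1 : (Fin p ⊕ Fin q) →₀ ℕ) (Sum.inl i))
        ≤ ∑ t ∈ (Finset.univ : Finset (Fin p)), (Finsupp.single (Sum.inl t) 1 : (Fin p ⊕ Fin q) →₀ ℕ) (Sum.inl i) :=
      Finset.sum_le_sum_of_subset (Finset.erase_subset _ _)
    have hE1 := hEl i
    rw [hE, Finsupp.finset_sum_apply] at hE1
    omega
  have hSIyl : ∀ d ∈ SIy, ∀ i, d (Sum.inl i) = 0 := by
    rintro d ⟨b, _, rfl⟩ i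
    exact Finsupp.mapDomain_notin_range _ _ (by simp)
  -- canonical forms of the ideals
  have hx : (∏ i : Fin p, (X (Sum.inl i) : MvPolynomial (Fin p ⊕ Fin q) K)) = monomial E 1 :=
    prodX _ _
  have hy : (∏ j : Fin q, (X (Sum.inr j) : MvPolynomial (Fin p ⊕ Fin q) K)) = monomial F 1 :=
    prodX _ _
  have hIx' : Ix = Ideal.span (M K SIx) := by
    rw [hIx]; congr 1; ext m
    constructor
    · rintro ⟨i, rfl⟩
      exact ⟨_, ⟨i, rfl⟩, (prodX _ _).symm⟩
    · rintro ⟨d, ⟨i, rfl⟩, rfl⟩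
      exact ⟨i, (prodX _ _).symm⟩
  have hIy' : Iy = Ideal.span (M K SIy) := by
    rw [hIy]; congr 1
    rw [hSIy, M, Set.image_image]
  -- the witness for y ∈ Iy
  have hd0 : ∃ d0 ∈ SIy, d0 ≤ F := by
    rw [hIy', mem_span_M, hy] at hyIy
    exact hyIy F (by rw [support_monomial, if_neg (one_ne_zero : (1:K) ≠ 0)]; simp)
  obtain ⟨d0, hd0S, hd0F⟩ := hd0
  -- the padding generator
  set g0 : (Fin p ⊕ Fin q) →₀ ℕ :=
    ∑ t ∈ Finset.univ.erase (⟨0, hp⟩ : Fin p), Finsupp.single (Sum.inl t) 1 with hg0def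
  have hg0 : g0 ∈ SIx := ⟨⟨0, hp⟩, rfl⟩
  have hg0l : ∀ i, g0 (Sum.inl i) ≤ 1 := hSIxl g0 hg0
  have hg0r : ∀ j, g0 (Sum.inr j) = 0 := hSIxr g0 hg0
  -- canonical form of Jh
  set T : ℕ → Set ((Fin p ⊕ Fin q) →₀ ℕ) := fun h =>
    Set.image2 (· + ·) (Set.image2 (· + ·) {(k - h) • E + h • F} (iter SIy (k - h)))
      (iter SIx h) with hT
  have hJ : ∀ h, Jh K p q Ix Iy k h = Ideal.span (M K (T h)) := by
    intro h
    rw [Jh, hIx', hIy', span_M_pow, span_M_pow]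
    have hsing : ({(∏ i : Fin p, X (Sum.inl i)) ^ (k - h) *
        (∏ j : Fin q, X (Sum.inr j)) ^ h} : Set (MvPolynomial (Fin p ⊕ Fin q) K)) =
        M K {(k - h) • E + h • F} := by
      rw [M, Set.image_singleton, hx, hy, monomial_pow, monomial_pow, monomial_mul,
        one_pow, one_pow, one_mul]
    rw [hsing, span_M_mul, span_M_mul, hT]
  -- canonical form of the RHS
  set TR : Set ((Fin p ⊕ Fin q) →₀ ℕ) :=
    Set.image2 (· + ·)
      (Set.image2 (· + ·)
        (Set.image2 (· + ·) {(k - ℓ + 1) • E} (iter SIx (ℓ - 1))) {ℓ • F})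
      (iter SIy (k - ℓ)) with hTR
  have hR : Ideal.span {(∏ i : Fin p, (X (Sum.inl i) : MvPolynomial (Fin p ⊕ Fin q) K))
          ^ (k - ℓ + 1)} * Ix ^ (ℓ - 1) *
        Ideal.span {(∏ j : Fin q, (X (Sum.inr j) : MvPolynomial (Fin p ⊕ Fin q) K)) ^ ℓ} *
        Iy ^ (k - ℓ) = Ideal.span (M K TR) := by
    have h1 : ({(∏ i : Fin p, X (Sum.inl i)) ^ (k - ℓ + 1)} :
        Set (MvPolynomial (Fin p ⊕ Fin q) K)) = M K {(k - ℓ + 1) • E} := by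
      rw [M, Set.image_singleton, hx, monomial_pow, one_pow]
    have h2 : ({(∏ j : Fin q, X (Sum.inr j)) ^ ℓ} :
        Set (MvPolynomial (Fin p ⊕ Fin q) K)) = M K {ℓ • F} := by
      rw [M, Set.image_singleton, hy, monomial_pow, one_pow]
    rw [h1, h2, hIx', hIy', span_M_pow, span_M_pow, span_M_mul, span_M_mul, span_M_mul, hTR]
  -- canonical form of the sum
  have hSum : (∑ h ∈ Finset.range ℓ, Jh K p q Ix Iy k h) =
      Ideal.span (M K (⋃ h ∈ Finset.range ℓ, T h)) := by
    rw [Finset.sum_congr rfl fun h _ => hJ h, sum_span_M]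
  rw [hSum, hJ, hR]
  -- now a statement about monomial ideals
  ext f
  rw [Ideal.mem_inf, mem_span_M, mem_span_M, mem_span_M]
  constructor
  · rintro ⟨h1, h2⟩ m hm
    obtain ⟨s, hs, hsm⟩ := h1 m hm
    obtain ⟨t, ht, htm⟩ := h2 m hm
    rw [Set.mem_iUnion₂] at hs
    obtain ⟨h, hh, hsT⟩ := hs
    rw [Finset.mem_range] at hh
    obtain ⟨a, ha, c, hc, rfl⟩ := hsT
    obtain ⟨e, he, b, hb, rfl⟩ := ha
    rw [Set.mem_singleton_iff] at he; subst he
    obtain ⟨a', ha', c', hc', rfl⟩ := ht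
    obtain ⟨e', he', b', hb', rfl⟩ := ha'
    rw [Set.mem_singleton_iff] at he'; subst he'
    -- build the witness
    have hcc : c + (ℓ - 1 - h) • g0 ∈ iter SIx (ℓ - 1) := by
      have h3 := iter_add_mem hc (nsmul_mem_iter hg0 (ℓ - 1 - h))
      rwa [show h + (ℓ - 1 - h) = ℓ - 1 by omega] at h3
    refine ⟨(((k - ℓ + 1) • E + (c + (ℓ - 1 - h) • g0)) + ℓ • F) + b',
      ⟨_, ⟨_, ⟨_, rfl, _, hcc, rfl⟩, _, rfl, rfl⟩, _, hb', rfl⟩, ?_⟩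
    rw [Finsupp.le_def]; intro z
    cases z with
    | inl i =>
        have hbz : b (Sum.inl i) = 0 := iter_zero_on (fun d hd => hSIyl d hd i) _ b hb
        have hb'z : b' (Sum.inl i) = 0 := iter_zero_on (fun d hd => hSIyl d hd i) _ b' hb'
        have hgl := hg0l i
        have h1 := Finsupp.le_def.mp hsm (Sum.inl i)
        have hmul : (ℓ - 1 - h) * g0 (Sum.inl i) ≤ ℓ - 1 - h :=
          le_trans (Nat.mul_le_mul_left _ hgl) (by omega)
        simp only [Finsupp.add_apply, Finsupp.smul_apply, smul_eq_mul, hEl, hEr, hFl, hFr,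
          hbz, hb'z, mul_one, mul_zero, add_zero, zero_add] at h1 ⊢
        obtain ⟨w, hw⟩ : ∃ w, (ℓ - 1 - h) * g0 (Sum.inl i) = w := ⟨_, rfl⟩
        rw [hw] at hmul ⊢
        omega
    | inr j =>
        have hcz : c (Sum.inr j) = 0 := iter_zero_on (fun d hd => hSIxr d hd j) _ c hc
        have hc'z : c' (Sum.inr j) = 0 := iter_zero_on (fun d hd => hSIxr d hd j) _ c' hc'
        have hgz := hg0r j
        have h2 := Finsupp.le_def.mp htm (Sum.inr j)
        simp only [Finsupp.add_apply, Finsupp.smul_apply, smul_eq_mul, hEl, hEr, hFl, hFr,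
          hcz, hc'z, hgz, mul_one, mul_zero, add_zero, zero_add] at h2 ⊢
        omega
  · intro hu
    constructor <;> intro m hm
    · obtain ⟨u, hU, hum⟩ := hu m hm
      obtain ⟨a, ha, b', hb', rfl⟩ := hU
      obtain ⟨a2, ha2, e, he, rfl⟩ := ha
      rw [Set.mem_singleton_iff] at he; subst he
      obtain ⟨e2, he2, c, hc, rfl⟩ := ha2
      rw [Set.mem_singleton_iff] at he2; subst he2
      have hbb : d0 + b' ∈ iter SIy (k - (ℓ - 1)) := by
        have h3 := iter_add_mem (mem_iter_one hd0S) hb'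
        rwa [show 1 + (k - ℓ) = k - (ℓ - 1) by omega] at h3
      refine ⟨((k - (ℓ - 1)) • E + (ℓ - 1) • F + (d0 + b')) + c,
        Set.mem_biUnion (Finset.mem_range.mpr (by omega : ℓ - 1 < ℓ))
          ⟨_, ⟨_, rfl, _, hbb, rfl⟩, _, hc, rfl⟩, ?_⟩
      rw [Finsupp.le_def]; intro z
      have hU := Finsupp.le_def.mp hum z
      cases z with
      | inl i =>
          have hb'z : b' (Sum.inl i) = 0 := iter_zero_on (fun d hd => hSIyl d hd i) _ b' hb'
          have hd0z : d0 (Sum.inl i) = 0 := hSIyl d0 hd0S i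
          simp only [Finsupp.add_apply, Finsupp.smul_apply, smul_eq_mul, hEl, hEr, hFl, hFr,
            hb'z, hd0z, mul_one, mul_zero, add_zero, zero_add] at hU ⊢
          omega
      | inr j =>
          have hcz : c (Sum.inr j) = 0 := iter_zero_on (fun d hd => hSIxr d hd j) _ c hc
          have hd0z : d0 (Sum.inr j) ≤ 1 := by
            have h4 := Finsupp.le_def.mp hd0F (Sum.inr j)
            rwa [hFr] at h4
          simp only [Finsupp.add_apply, Finsupp.smul_apply, smul_eq_mul, hEl, hEr, hFl, hFr,
            hcz, mul_one, mul_zero, add_zero, zero_add] at hU ⊢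
          omega
    · obtain ⟨u, hU, hum⟩ := hu m hm
      obtain ⟨a, ha, b', hb', rfl⟩ := hU
      obtain ⟨a2, ha2, e, he, rfl⟩ := ha
      rw [Set.mem_singleton_iff] at he; subst he
      obtain ⟨e2, he2, c, hc, rfl⟩ := ha2
      rw [Set.mem_singleton_iff] at he2; subst he2
      have hcg : c + g0 ∈ iter SIx ℓ := by
        have h3 := iter_add_mem hc (mem_iter_one hg0)
        rwa [show ℓ - 1 + 1 = ℓ by omega] at h3
      refine ⟨((k - ℓ) • E + ℓ • F + b') + (c + g0),
        ⟨_, ⟨_, rfl, _, hb', rfl⟩, _, hcg, rfl⟩, ?_⟩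
      rw [Finsupp.le_def]; intro z
      have hU := Finsupp.le_def.mp hum z
      cases z with
      | inl i =>
          have hb'z : b' (Sum.inl i) = 0 := iter_zero_on (fun d hd => hSIyl d hd i) _ b' hb'
          have hgl := hg0l i
          simp only [Finsupp.add_apply, Finsupp.smul_apply, smul_eq_mul, hEl, hEr, hFl, hFr,
            hb'z, mul_one, mul_zero, add_zero, zero_add] at hU ⊢
          omega
      | inr j =>
          have hcz : c (Sum.inr j) = 0 := iter_zero_on (fun d hd => hSIxr d hd j) _ c hc
          have hgz := hg0r j
          simp only [Finsupp.add_apply, Finsupp.smul_apply, smul_eq_mul, hEl, hEr, hFl, hFr,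
            hcz, hgz, mul_one, mul_zero, add_zero, zero_add] at hU ⊢
          omega
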